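/- A valuation v on K goods is nondecreasing (v(A) ≤ v(B) whenever A ⊆ B) if and only if μ(k) ≥ max over bundles A not containing k of θ(A∪{k}) - θ(A), for every good k, where μ(k)=v({k}) and θ is the interaction function of v. -/
import Mathlib


theorem nondecreasing_iff_mu_ge {K : ℕ} (v θ : Finset (Fin K) → ℝ)
    (hv0 : v ∅ = 0)
    (hθ : ∀ A : Finset (Fin K), θ A = (∑ k ∈ A, v {k}) - v A) :
    (∀ A B : Finset (Fin K), A ⊆ B → v A ≤ v B) ↔
    (∀ k : Fin K, ∀ A : Finset (Fin K), k ∉ A → θ (insert k A) - θ A ≤ v {k}) := by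
  have key : ∀ k : Fin K, ∀ A : Finset (Fin K), k ∉ A →
      θ (insert k A) - θ A = v {k} + v A - v (insert k A) := by
    intro k A hk
    rw [hθ, hθ, Finset.sum_insert hk]
    ring
  constructor
  · intro hmono k A hk
    rw [key k A hk]
    have := hmono A (insert k A) (Finset.subset_insert k A)
    linarith
  · intro h A B hAB
    have step : ∀ k : Fin K, ∀ S : Finset (Fin K), k ∉ S → v S ≤ v (insert k S) := by
      intro k S hk
      have := h k S hk
      rw [key k S hk] at this
      linarith
    classical
    have hgen : ∀ n : ℕ, ∀ A B : Finset (Fin K), A ⊆ B → (B \ A).card = n → v A ≤ v B := by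
      intro n
      induction n with
      | zero =>
        intro A B hAB h0
        have he : B \ A = ∅ := Finset.card_eq_zero.mp h0
        have hBA : B ⊆ A := Finset.sdiff_eq_empty_iff_subset.mp he
        have : B = A := Finset.Subset.antisymm hBA hAB
        simp [this]
      | succ n ih =>
        intro A B hAB hcard
        have hne : (B \ A).Nonempty := by
          rw [← Finset.card_pos, hcard]; omega
        obtain ⟨k, hkmem⟩ := hne
        obtain ⟨hkB, hkA⟩ := Finset.mem_sdiff.mp hkmem
        have h1 : v A ≤ v (insert k A) := step k A hkA
        have h2 : v (insert k A) ≤ v B := by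
          apply ih
          · exact Finset.insert_subset hkB hAB
          · have : B \ insert k A = (B \ A).erase k := by
              ext x
              simp only [Finset.mem_sdiff, Finset.mem_insert, Finset.mem_erase]
              tauto
            rw [this, Finset.card_erase_of_mem hkmem, hcard]
            omega
        linarith
    exact hgen (B \ A).card A B hAB rfl
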